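/- Suppose F and G are CDFs of buying times for unit-cost ski rental with G(t) < F(t) for all t ∈ (y, z) and G(z) = F(z), where all buying by F and G before time y incurs identical expected cost. Then cost_G(z) > cost_F(z), where cost_H(x) = ∫₀^x (1+t) dH(t) + x(1 - H(x)). -/

import Mathlib

open Real MeasureTheory

/-- Expected cost of a unit-cost ski rental algorithm whose buying time has
CDF `H`, when the season ends at time `x`: buying at time `t ≤ x` costs `1+t`,
and otherwise rent `x` is paid. -/
noncomputable def skiCost (H : StieltjesFunction ℝ) (x : ℝ) : ℝ :=
  (∫ t in Set.Icc (0:ℝ) x, (1 + t) ∂H.measure) + x * (1 - H x)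

private lemma stj_leftLim (H : StieltjesFunction ℝ) (hc : Continuous H) (a : ℝ) :
    Function.leftLim H a = H a :=
  (H.mono.continuousWithinAt_Iio_iff_leftLim_eq).mp hc.continuousWithinAt

private lemma stj_zero (H : StieltjesFunction ℝ) (hc : Continuous H)
    (hneg : ∀ t < (0:ℝ), H t = 0) : H 0 = 0 := by
  have h1 : Filter.Tendsto H (nhdsWithin (0:ℝ) (Set.Iio 0)) (nhds (H 0)) :=
    (hc.continuousAt).continuousWithinAt.tendsto
  have h2 : Filter.Tendsto H (nhdsWithin (0:ℝ) (Set.Iio 0)) (nhds 0) := by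
    apply Filter.Tendsto.congr' _ tendsto_const_nhds
    filter_upwards [self_mem_nhdsWithin] with t ht
    exact (hneg t ht).symm
  exact tendsto_nhds_unique h1 h2

private lemma skiCost_eq (H : StieltjesFunction ℝ) (hc : Continuous H)
    (hneg : ∀ t < (0:ℝ), H t = 0) {z : ℝ} (hz : 0 < z) :
    skiCost H z = H z + z - ∫ t in Set.Ioc 0 z, H t := by
  have hH0 : H 0 = 0 := stj_zero H hc hneg
  have hHz : 0 ≤ H z := hH0 ▸ H.mono hz.le
  have h0 : H.measure {(0:ℝ)} = 0 := by
    rw [H.measure_singleton, stj_leftLim H hc, sub_self, ENNReal.ofReal_zero]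
  have hIoc : H.measure (Set.Ioc 0 z) = ENNReal.ofReal (H z) := by
    rw [H.measure_Ioc, hH0, sub_zero]
  -- rewrite Icc integral as Ioc integral
  have hIccIoc : (∫ t in Set.Icc (0:ℝ) z, (1 + t) ∂H.measure)
      = ∫ t in Set.Ioc (0:ℝ) z, (1 + t) ∂H.measure := integral_Icc_eq_integral_Ioc' h0
  haveI : IsFiniteMeasure (H.measure.restrict (Set.Ioc 0 z)) := by
    constructor
    rw [Measure.restrict_apply_univ, hIoc]
    exact ENNReal.ofReal_lt_top
  have hint_id : IntegrableOn id (Set.Ioc 0 z) H.measure := continuous_id.integrableOn_Ioc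
  have hsplit : (∫ t in Set.Ioc (0:ℝ) z, (1 + t) ∂H.measure)
      = (∫ _t in Set.Ioc (0:ℝ) z, (1:ℝ) ∂H.measure) + ∫ t in Set.Ioc (0:ℝ) z, t ∂H.measure :=
    integral_add (integrable_const 1) hint_id
  have hone : (∫ _t in Set.Ioc (0:ℝ) z, (1:ℝ) ∂H.measure) = H z := by
    rw [setIntegral_const, measureReal_def, hIoc, ENNReal.toReal_ofReal hHz, smul_eq_mul, mul_one]
  -- layer cake for ∫ t
  have hnn : 0 ≤ᵐ[H.measure.restrict (Set.Ioc 0 z)] id :=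
    ae_restrict_of_forall_mem measurableSet_Ioc fun t ht => le_of_lt ht.1
  have hbdd : id ≤ᵐ[H.measure.restrict (Set.Ioc 0 z)] fun _ => z :=
    ae_restrict_of_forall_mem measurableSet_Ioc fun t ht => ht.2
  have hlayer := hint_id.integral_eq_integral_Ioc_meas_le hnn hbdd
  have hmeas_eq : ∀ s ∈ Set.Ioc (0:ℝ) z,
      ((H.measure.restrict (Set.Ioc 0 z)) {a : ℝ | s ≤ a}).toReal = H z - H s := by
    intro s hs
    have : {a : ℝ | s ≤ a} ∩ Set.Ioc 0 z = Set.Icc s z := by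
      ext a
      simp only [Set.mem_inter_iff, Set.mem_setOf_eq, Set.mem_Ioc, Set.mem_Icc]
      constructor
      · rintro ⟨h1, _, h3⟩; exact ⟨h1, h3⟩
      · rintro ⟨h1, h2⟩; exact ⟨h1, lt_of_lt_of_le hs.1 h1, h2⟩
    show ((H.measure.restrict (Set.Ioc 0 z)) (Set.Ici s)).toReal = _
    rw [Measure.restrict_apply measurableSet_Ici, show Set.Ici s ∩ Set.Ioc 0 z = Set.Icc s z from this,
      H.measure_Icc, stj_leftLim H hc, ENNReal.toReal_ofReal (sub_nonneg.mpr (H.mono hs.2))]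
  have hid : (∫ t in Set.Ioc (0:ℝ) z, t ∂H.measure)
      = ∫ s in Set.Ioc (0:ℝ) z, (H z - H s) := by
    rw [show (∫ t in Set.Ioc (0:ℝ) z, t ∂H.measure) = ∫ t, id t ∂(H.measure.restrict (Set.Ioc 0 z))
      from rfl, hlayer]
    exact setIntegral_congr_fun measurableSet_Ioc hmeas_eq
  have hHint : IntegrableOn H (Set.Ioc 0 z) := hc.integrableOn_Ioc
  have hsub : (∫ s in Set.Ioc (0:ℝ) z, (H z - H s))
      = z * H z - ∫ s in Set.Ioc (0:ℝ) z, H s := by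
    rw [integral_sub (integrable_const _) hHint, setIntegral_const, smul_eq_mul,
      measureReal_def, Real.volume_Ioc, ENNReal.toReal_ofReal (by linarith), sub_zero]
  unfold skiCost
  rw [hIccIoc, hsplit, hone, hid, hsub]
  ring

theorem delayed_cdf_has_higher_cost (F G : StieltjesFunction ℝ)
    (hFcont : Continuous F) (hGcont : Continuous G)
    (hFneg : ∀ t < (0:ℝ), F t = 0) (hGneg : ∀ t < (0:ℝ), G t = 0)
    (hF1 : ∀ t, F t ≤ 1) (hG1 : ∀ t, G t ≤ 1)
    (y z : ℝ) (hyz : y < z)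
    (heq : ∀ t ≤ y, F t = G t)
    (hlt : ∀ t ∈ Set.Ioo y z, G t < F t)
    (hzeq : G z = F z) :
    skiCost F z < skiCost G z := by
  have hz : 0 < z := by
    by_contra h
    push_neg at h
    have hm : (y + z) / 2 ∈ Set.Ioo y z := ⟨by linarith, by linarith⟩
    have hm0 : (y + z) / 2 < 0 := by
      rcases hm with ⟨h1, h2⟩; linarith
    have := hlt _ hm
    rw [hFneg _ hm0, hGneg _ hm0] at this
    exact lt_irrefl 0 this
  rw [skiCost_eq F hFcont hFneg hz, skiCost_eq G hGcont hGneg hz, hzeq]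
  have hIocF : (∫ t in Set.Ioc (0:ℝ) z, F t) = ∫ t in (0:ℝ)..z, F t :=
    (intervalIntegral.integral_of_le hz.le).symm
  have hIocG : (∫ t in Set.Ioc (0:ℝ) z, G t) = ∫ t in (0:ℝ)..z, G t :=
    (intervalIntegral.integral_of_le hz.le).symm
  rw [hIocF, hIocG]
  have hF0 : F 0 = 0 := stj_zero F hFcont hFneg
  have hG0 : G 0 = 0 := stj_zero G hGcont hGneg
  set y' : ℝ := max y 0 with hy'def
  have hy'0 : 0 ≤ y' := le_max_right _ _
  have hy'z : y' < z := max_lt hyz hz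
  have hkey : 0 < ∫ t in (0:ℝ)..z, (F t - G t) := by
    have hfi1 : IntervalIntegrable (fun t => F t - G t) volume 0 y' :=
      (hFcont.sub hGcont).intervalIntegrable _ _
    have hfi2 : IntervalIntegrable (fun t => F t - G t) volume y' z :=
      (hFcont.sub hGcont).intervalIntegrable _ _
    have h1 : (∫ t in (0:ℝ)..y', (F t - G t)) = 0 := by
      have hcg : (∫ t in (0:ℝ)..y', (F t - G t)) = ∫ t in (0:ℝ)..y', (0:ℝ) := by
        apply intervalIntegral.integral_congr
        intro t ht
        show F t - G t = (0:ℝ)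
        rw [Set.uIcc_of_le hy'0] at ht
        rcases le_or_gt t y with h | h
        · rw [heq t h, sub_self]
        · have ht0 : t = 0 := by
            have hle : t ≤ 0 := by
              by_contra h'
              push_neg at h'
              exact absurd ht.2 (not_le.mpr (max_lt h h'))
            exact le_antisymm hle ht.1
          rw [ht0, hF0, hG0, sub_self]
      rw [hcg, intervalIntegral.integral_zero]
    have h2 : 0 < ∫ t in y'..z, (F t - G t) := by
      apply intervalIntegral.intervalIntegral_pos_of_pos_on hfi2 _ hy'z
      intro t ht
      have : t ∈ Set.Ioo y z := ⟨lt_of_le_of_lt (le_max_left y 0) ht.1, ht.2⟩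
      exact sub_pos.mpr (hlt t this)
    rw [← intervalIntegral.integral_add_adjacent_intervals hfi1 hfi2, h1, zero_add]
    exact h2
  have : (∫ t in (0:ℝ)..z, (F t - G t))
      = (∫ t in (0:ℝ)..z, F t) - ∫ t in (0:ℝ)..z, G t :=
    intervalIntegral.integral_sub (hFcont.intervalIntegrable _ _) (hGcont.intervalIntegrable _ _)
  rw [this] at hkey
  linarith
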